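/- arXiv:1001.0409 — 2 statements merged into one kernel-verified Lean document; each statement's English description precedes it below -/
import Mathlib

section
/- Let F be a finite field with q elements, let n be a positive integer, and let E be a finite field extension of F with |E| = q^n. Then the number of elements α of E whose minimal polynomial over F has degree n equals n times the number of monic irreducible polynomials of degree n over F (i.e., |R_n| = n·|P_n|). -/
open Polynomial

lemma my_nat_card_sigma {ι : Type*} {β : ι → Type*} [Finite ι] [∀ i, Finite (β i)] {m : ℕ}
    (h : ∀ i, Nat.card (β i) = m) : Nat.card (Σ i, β i) = Nat.card ι * m := by
  cases nonempty_fintype ι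
  have : ∀ i, Fintype (β i) := fun i => Fintype.ofFinite _
  classical
  rw [Nat.card_eq_fintype_card, Nat.card_eq_fintype_card, Fintype.card_sigma]
  simp only [← Nat.card_eq_fintype_card, h, Finset.sum_const, Finset.card_univ, smul_eq_mul]

lemma my_dvd (F : Type*) [Field F] [Fintype F] (q n : ℕ) (hq : q = Fintype.card F)
    {p : F[X]} (hm : p.Monic) (hi : Irreducible p) (hd : p.natDegree = n) :
    p ∣ (X ^ q ^ n - X : F[X]) := by
  haveI : Fact (Irreducible p) := ⟨hi⟩
  set K := AdjoinRoot p
  haveI : Module.Finite F K := PowerBasis.finite (AdjoinRoot.powerBasis hm.ne_zero)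
  haveI : Finite K := Module.finite_of_finite F
  haveI : Fintype K := Fintype.ofFinite K
  have hcard : Fintype.card K = q ^ n := by
    rw [hq, Module.card_eq_pow_finrank (K := F) (V := K),
      (AdjoinRoot.powerBasis hm.ne_zero).finrank, AdjoinRoot.powerBasis_dim, hd]
  have hroot : (aeval (AdjoinRoot.root p)) (X ^ q ^ n - X : F[X]) = 0 := by
    rw [map_sub, map_pow, aeval_X, ← hcard, FiniteField.pow_card, sub_self]
  have hmin : minpoly F (AdjoinRoot.root p) = p := by
    rw [AdjoinRoot.minpoly_root hm.ne_zero, hm.leadingCoeff, inv_one, map_one, mul_one]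
  exact hmin ▸ minpoly.dvd F _ hroot

/-- If `E/F` is a finite field extension with `|F| = q` and `|E| = q^n`, then the number of
`α ∈ E` whose minimal polynomial over `F` has degree `n` is `n` times the number of monic
irreducible polynomials of degree `n` over `F`. -/
theorem card_roots_eq_n_mul_card_irreducible (F E : Type*) [Field F] [Fintype F]
    [Field E] [Fintype E] [Algebra F E] (q n : ℕ) (hq : q = Fintype.card F) (hn : 0 < n)
    (hE : Fintype.card E = q ^ n) :
    Nat.card {α : E // (minpoly F α).natDegree = n} =
      n * Nat.card {p : F[X] // p.Monic ∧ Irreducible p ∧ p.natDegree = n} := by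
  classical
  have hq1 : 1 < q ^ n := Nat.one_lt_pow hn.ne' (hq ▸ Fintype.one_lt_card)
  have hne : (X ^ q ^ n - X : F[X]) ≠ 0 := FiniteField.X_pow_card_sub_X_ne_zero F hq1
  have hsplits : ∀ p : F[X], p.Monic → Irreducible p → p.natDegree = n →
      Splits (p.map (algebraMap F E)) := by
    intro p hm hi hd
    have h1 : Splits ((X ^ q ^ n - X : F[X]).map (algebraMap F E)) := by
      rw [← hE]
      haveI := FiniteField.isSplittingField_sub E F
      exact IsSplittingField.splits (L := E) (X ^ Fintype.card E - X : F[X])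
    exact Splits.of_dvd h1 (Polynomial.map_ne_zero hne) (Polynomial.map_dvd _ (my_dvd F q n hq hm hi hd))
  have hsep : ∀ p : F[X], Irreducible p → p.Separable := fun p hi =>
    PerfectField.separable_of_irreducible hi
  set P := {p : F[X] // p.Monic ∧ Irreducible p ∧ p.natDegree = n} with hP
  have hint : ∀ α : E, IsIntegral F α := fun α => IsIntegral.of_finite F α
  let f : {α : E // (minpoly F α).natDegree = n} → P := fun α =>
    ⟨minpoly F α.1, minpoly.monic (hint α.1), minpoly.irreducible (hint α.1), α.2⟩
  have hfsurj : Function.Surjective f := by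
    rintro ⟨p, hm, hi, hd⟩
    obtain ⟨α, hα⟩ := Splits.exists_eval_eq_zero (hsplits p hm hi hd)
      (by rw [degree_map, degree_eq_natDegree hi.ne_zero, hd]; exact_mod_cast hn.ne')
    have hmin : minpoly F α = p :=
      (minpoly.eq_of_irreducible_of_monic hi (by rwa [aeval_def, ← eval_map]) hm).symm
    exact ⟨⟨α, by rw [hmin, hd]⟩, Subtype.ext hmin⟩
  haveI : Finite P := Finite.of_surjective f hfsurj
  have hfiber : ∀ p : P, Nat.card {α // f α = p} = n := by
    rintro ⟨p, hm, hi, hd⟩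
    have key : ∀ x : E, x ∈ p.rootSet E → minpoly F x = p := fun x hx =>
      (minpoly.eq_of_irreducible_of_monic hi (mem_rootSet.mp hx).2 hm).symm
    have e : {α // f α = (⟨p, hm, hi, hd⟩ : P)} ≃ p.rootSet E :=
      { toFun := fun α => ⟨α.1.1, by
          have h1 : minpoly F α.1.1 = p := congrArg Subtype.val α.2
          rw [mem_rootSet]
          refine ⟨hi.ne_zero, ?_⟩
          have h2 := minpoly.aeval F α.1.1
          rwa [h1] at h2⟩
        invFun := fun x => ⟨⟨x.1, by rw [key x.1 x.2, hd]⟩, Subtype.ext (key x.1 x.2)⟩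
        left_inv := fun α => by ext; rfl
        right_inv := fun x => by ext; rfl }
    rw [Nat.card_congr e, Nat.card_eq_fintype_card,
      card_rootSet_eq_natDegree (hsep p hi) (hsplits p hm hi hd), hd]
  calc Nat.card {α : E // (minpoly F α).natDegree = n}
      = Nat.card (Σ p : P, {α // f α = p}) := Nat.card_congr (Equiv.sigmaFiberEquiv f).symm
    _ = Nat.card P * n := my_nat_card_sigma hfiber
    _ = n * Nat.card P := Nat.mul_comm _ _
end

section
/- Let F be a finite field with q elements, let n be a positive integer, and let E be a finite field extension of F with |E| = q^n. Then the number of elements α of E whose minimal polynomial over F has degree n equals ∑_{d∣n} μ(n/d)·q^d, where the sum is over all positive divisors d of n and μ is the Möbius function (i.e., |R_n| = ∑_{d∣n} μ(n/d)·q^d). -/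
open Polynomial


lemma aux_dvd_of_pow_sub_one_dvd {q : ℕ} (hq : 2 ≤ q) :
    ∀ d e : ℕ, 0 < e → (q ^ e - 1 ∣ q ^ d - 1) → e ∣ d := by
  intro d
  induction d using Nat.strong_induction_on with
  | _ d ih =>
    intro e he hdvd
    rcases Nat.eq_zero_or_pos d with rfl | hd0
    · exact dvd_zero e
    by_cases hlt : d < e
    · exfalso
      have h1 : 0 < q ^ d - 1 := by
        have : 2 ≤ q ^ d := le_trans hq (Nat.le_self_pow hd0.ne' q)
        omega
      have h2 : q ^ d < q ^ e := Nat.pow_lt_pow_right (by omega) hlt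
      have := Nat.le_of_dvd h1 hdvd
      omega
    · push_neg at hlt
      -- show q^e - 1 ∣ q^(d-e) - 1 in ℤ
      have key : q ^ e - 1 ∣ q ^ (d - e) - 1 := by
        have h1 : (q : ℤ) ^ e - 1 ∣ (q : ℤ) ^ d - 1 := by
          have := hdvd
          have hqe : 1 ≤ q ^ e := Nat.one_le_pow _ _ (by omega)
          have hqd : 1 ≤ q ^ d := Nat.one_le_pow _ _ (by omega)
          zify [hqe, hqd] at this
          exact this
        have h2 : (q : ℤ) ^ e - 1 ∣ (q : ℤ) ^ e * ((q : ℤ) ^ (d - e) - 1) := by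
          have : (q : ℤ) ^ e * ((q : ℤ) ^ (d - e) - 1) =
              ((q : ℤ) ^ d - 1) - ((q : ℤ) ^ e - 1) := by
            have hd' : e + (d - e) = d := by omega
            rw [mul_sub, ← pow_add, hd', mul_one]; ring
          rw [this]
          exact dvd_sub h1 dvd_rfl
        have h3 : (q : ℤ) ^ e - 1 ∣ ((q : ℤ) ^ e - 1) * ((q : ℤ) ^ (d - e) - 1) :=
          Dvd.intro _ rfl
        have h4 : (q : ℤ) ^ e - 1 ∣ (q : ℤ) ^ (d - e) - 1 := by
          have := dvd_sub h2 h3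
          rwa [← sub_mul, sub_sub_cancel, one_mul] at this
        have hqde : 1 ≤ q ^ (d - e) := Nat.one_le_pow _ _ (by omega)
        have hqe : 1 ≤ q ^ e := Nat.one_le_pow _ _ (by omega)
        zify [hqde, hqe]
        exact h4
      have hde : e ∣ d - e := ih (d - e) (by omega) e he key
      have hd' : d - e + e = d := by omega
      rw [← hd']
      exact Nat.dvd_add hde dvd_rfl


lemma card_fixed_set (E : Type*) [Field E] [Fintype E] [DecidableEq E] (q n d : ℕ)
    (hq2 : 2 ≤ q) (hE : Fintype.card E = q ^ n) (hd : d ∣ n) (hd0 : 0 < d) (hn : 0 < n) :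
    (Finset.univ.filter fun α : E => α ^ q ^ d = α).card = q ^ d := by
  have hqd1 : 1 ≤ q ^ d := Nat.one_le_pow _ _ (by omega)
  have hqd2 : 2 ≤ q ^ d := le_trans hq2 (Nat.le_self_pow hd0.ne' q)
  have hqn2 : 2 ≤ q ^ n := le_trans hq2 (Nat.le_self_pow hn.ne' q)
  have hdvd : q ^ d - 1 ∣ q ^ n - 1 := by
    obtain ⟨k, rfl⟩ := hd
    simpa only [one_pow, pow_mul] using Nat.sub_dvd_pow_sub_pow (q ^ d) 1 k
  have hcardu : Nat.card Eˣ = q ^ n - 1 := by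
    rw [Nat.card_eq_fintype_card, Fintype.card_units, hE]
  obtain ⟨g, hg⟩ := IsCyclic.exists_ofOrder_eq_natCard (α := Eˣ)
  rw [hcardu] at hg
  set m := (q ^ n - 1) / (q ^ d - 1) with hm
  have hmd : m ∣ q ^ n - 1 := Nat.div_dvd_of_dvd hdvd
  have hζord : orderOf (g ^ m) = q ^ d - 1 := by
    rw [orderOf_pow, hg, Nat.gcd_eq_right hmd, hm,
      Nat.div_div_self hdvd (by omega)]
  have hprim : IsPrimitiveRoot ((g ^ m : Eˣ) : E) (q ^ d - 1) := by
    have := IsPrimitiveRoot.orderOf ((g ^ m : Eˣ) : E)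
    rwa [orderOf_units, hζord] at this
  have hroots : Multiset.card (nthRoots (q ^ d - 1) (1 : E)) = q ^ d - 1 :=
    hprim.card_nthRoots_one
  have hnodup : (nthRoots (q ^ d - 1) (1 : E)).Nodup := hprim.nthRoots_nodup one_ne_zero
  have hset : (Finset.univ.filter fun α : E => α ^ q ^ d = α) =
      insert (0 : E) (nthRoots (q ^ d - 1) (1 : E)).toFinset := by
    ext α
    simp only [Finset.mem_filter, Finset.mem_univ, true_and, Finset.mem_insert,
      Multiset.mem_toFinset, mem_nthRoots (show 0 < q ^ d - 1 by omega)]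
    constructor
    · intro h
      rcases eq_or_ne α 0 with rfl | hα
      · exact Or.inl rfl
      · right
        have : α * α ^ (q ^ d - 1) = α * 1 := by
          rw [mul_one, ← pow_succ']
          rw [show q ^ d - 1 + 1 = q ^ d from by omega, h]
        exact mul_left_cancel₀ hα this
    · rintro (rfl | h)
      · simp [pow_eq_zero_iff (show q ^ d ≠ 0 by omega)]
      · have : α ^ q ^ d = α ^ (q ^ d - 1) * α := by
          rw [← pow_succ]
          congr 1
          omega
        rw [this, h, one_mul]
  rw [hset, Finset.card_insert_of_notMem, Multiset.toFinset_card_of_nodup hnodup, hroots]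
  · omega
  · rw [Multiset.mem_toFinset, mem_nthRoots (show 0 < q ^ d - 1 by omega)]
    simp [zero_pow (show q ^ d - 1 ≠ 0 by omega)]



lemma deg_dvd_iff (F E : Type*) [Field F] [Fintype F] [Field E] [Fintype E] [Algebra F E]
    (q : ℕ) (hq : q = Fintype.card F) (d : ℕ) (hd0 : 0 < d) (α : E) :
    (minpoly F α).natDegree ∣ d ↔ α ^ q ^ d = α := by
  have hq2 : 2 ≤ q := by rw [hq]; exact Fintype.one_lt_card
  haveI : FiniteDimensional F E := Module.Finite.of_finite
  have hint : IsIntegral F α := IsIntegral.of_finite F α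
  set e := (minpoly F α).natDegree with he
  have he0 : 0 < e := minpoly.natDegree_pos hint
  set K := IntermediateField.adjoin F {α} with hK
  letI : Fintype K := Fintype.ofFinite K
  letI : Fintype Kˣ := Fintype.ofFinite Kˣ
  have hfr : Module.finrank F K = e := IntermediateField.adjoin.finrank hint
  have hcardK : Fintype.card K = q ^ e := by
    rw [Module.card_eq_pow_finrank (K := F) (V := K), hfr, hq]
  constructor
  · rintro ⟨k, rfl⟩
    have hβ : (IntermediateField.AdjoinSimple.gen F α) ^ (Fintype.card K) ^ k =
        IntermediateField.AdjoinSimple.gen F α := FiniteField.pow_card_pow k _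
    have := congrArg (algebraMap K E) hβ
    rw [map_pow, IntermediateField.AdjoinSimple.algebraMap_gen] at this
    rwa [hcardK, ← pow_mul] at this
  · intro hα
    -- every element of K is fixed by x ↦ x ^ q ^ d
    set p := ringChar F with hpdef
    obtain ⟨m, hp, hqp⟩ := FiniteField.card F p
    haveI hpfact : Fact p.Prime := ⟨hp⟩
    rw [← hq] at hqp
    haveI : CharP E p := charP_of_injective_algebraMap (algebraMap F E).injective p
    haveI : ExpChar E p := ExpChar.prime hp
    have hfix : ∀ x : E, x ∈ K → x ^ q ^ d = x := by
      intro x hx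
      have hx' : x ∈ Algebra.adjoin F {α} := by
        rw [← IntermediateField.adjoin_simple_toSubalgebra_of_isAlgebraic hint.isAlgebraic]
        exact hx
      clear hx
      have hqd : q ^ d = p ^ ((m : ℕ) * d) := by rw [hqp, ← pow_mul]
      induction hx' using Algebra.adjoin_induction with
      | mem y hy => rwa [Set.mem_singleton_iff.mp hy]
      | algebraMap c =>
          rw [← map_pow]
          congr 1
          rw [hq]
          exact FiniteField.pow_card_pow d c
      | add x y _ _ hx hy => rw [hqd] at hx hy ⊢; rw [add_pow_char_pow, hx, hy]
      | mul x y _ _ hx hy => rw [mul_pow, hx, hy]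
    -- generator of Kˣ
    obtain ⟨γ, hγ⟩ := IsCyclic.exists_ofOrder_eq_natCard (α := Kˣ)
    have hγord : orderOf γ = q ^ e - 1 := by
      rw [hγ, Nat.card_units, Nat.card_eq_fintype_card, hcardK]
    have hγfix : ((γ : K) : E) ^ q ^ d = ((γ : K) : E) := hfix _ (γ : K).2
    have hγfix' : (γ : K) ^ q ^ d = (γ : K) := by
      apply Subtype.ext
      push_cast
      exact hγfix
    have hγone : γ ^ (q ^ d - 1) = 1 := by
      have hqd1 : 1 ≤ q ^ d := Nat.one_le_pow _ _ (by omega)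
      have : γ ^ (q ^ d - 1) * γ = 1 * γ := by
        rw [one_mul, ← pow_succ]
        rw [show q ^ d - 1 + 1 = q ^ d from by omega]
        apply Units.ext
        push_cast
        exact hγfix'
      exact mul_right_cancel this
    have hdvd : q ^ e - 1 ∣ q ^ d - 1 := hγord ▸ orderOf_dvd_of_pow_eq_one hγone
    exact aux_dvd_of_pow_sub_one_dvd hq2 d e he0 hdvd



/-- If `E/F` is a finite field extension with `|F| = q` and `|E| = q^n`, then the number of
`α ∈ E` whose minimal polynomial over `F` has degree `n` is `∑_{d ∣ n} μ(n/d) * q^d`. -/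
theorem card_degree_n_elements (F E : Type*) [Field F] [Fintype F]
    [Field E] [Fintype E] [Algebra F E] (q n : ℕ) (hq : q = Fintype.card F) (hn : 0 < n)
    (hE : Fintype.card E = q ^ n) :
    (Nat.card {α : E // (minpoly F α).natDegree = n} : ℤ) =
      ∑ d ∈ n.divisors, (ArithmeticFunction.moebius (n / d)) * (q : ℤ) ^ d := by
  classical
  have hq2 : 2 ≤ q := by rw [hq]; exact Fintype.one_lt_card
  set N : ℕ → ℕ := fun e => (Finset.univ.filter fun α : E => (minpoly F α).natDegree = e).card
    with hN
  have hNcard : ∀ e, Nat.card {α : E // (minpoly F α).natDegree = e} = N e := by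
    intro e
    rw [Nat.card_eq_fintype_card, Fintype.card_subtype]
  have key : ∀ d > 0, d ∣ n → (∑ e ∈ d.divisors, (N e : ℤ)) = (q : ℤ) ^ d := by
    intro d hd0 hd
    have h1 : (Finset.univ.filter fun α : E => α ^ q ^ d = α).card = q ^ d :=
      card_fixed_set E q n d hq2 hE hd hd0 hn
    have h2 : (Finset.univ.filter fun α : E => α ^ q ^ d = α) =
        (Finset.univ.filter fun α : E => (minpoly F α).natDegree ∣ d) := by
      ext α
      simp only [Finset.mem_filter, Finset.mem_univ, true_and]
      exact (deg_dvd_iff F E q hq d hd0 α).symm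
    have h3 : (Finset.univ.filter fun α : E => (minpoly F α).natDegree ∣ d).card =
        ∑ e ∈ d.divisors, N e := by
      rw [Finset.card_eq_sum_card_fiberwise
        (f := fun α : E => (minpoly F α).natDegree) (t := d.divisors)
        (fun α hα => by
          simp only [Finset.mem_coe, Finset.mem_filter, Finset.mem_univ, true_and] at hα
          exact Nat.mem_divisors.mpr ⟨hα, hd0.ne'⟩)]
      refine Finset.sum_congr rfl fun e he => ?_
      congr 1
      ext α
      simp only [Finset.mem_filter, Finset.mem_univ, true_and, hN]
      constructor
      · rintro ⟨-, h⟩; exact h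
      · intro h
        refine ⟨?_, h⟩
        rw [h]
        exact (Nat.mem_divisors.mp he).1
    have : (∑ e ∈ d.divisors, N e : ℕ) = q ^ d := by rw [← h3, ← h2, h1]
    exact_mod_cast this
  have main := (ArithmeticFunction.sum_eq_iff_sum_mul_moebius_eq_on
    (f := fun e => (N e : ℤ)) (g := fun d => (q : ℤ) ^ d)
    {d | d ∣ n} (fun m k hmk hk => hmk.trans hk)).mp
    (fun d hd0 hd => key d hd0 hd) n hn (dvd_refl n)
  rw [hNcard]
  rw [← main]
  simp only [Int.cast_id]
  rw [Nat.sum_divisorsAntidiagonal'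
    (f := fun i j => (ArithmeticFunction.moebius i : ℤ) * (q : ℤ) ^ j)]
end
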